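/- (Existence part of Proposition 1.) For any prices p_l ≥ 0 and p_a ≥ 0, there exists at least one market equilibrium, i.e., a point (x*, y*) ∈ Ω with h̃(x*, y*) = (x*, y*). -/

import Mathlib

open Set

/-- The feasible set of market shares: Ω = {(x,y) : x ≥ 0, y ≥ 0, x + y ≤ 1}. -/
def Omega : Set (ℝ × ℝ) := {p | 0 ≤ p.1 ∧ 0 ≤ p.2 ∧ p.1 + p.2 ≤ 1}

/-- θ_lb(x) = p_l / (R_L − f(1−x)). -/
noncomputable def thetaLB (RL : ℝ) (f : ℝ → ℝ) (pl : ℝ) (x : ℝ) : ℝ :=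
  pl / (RL - f (1 - x))

/-- θ_ab(y) = p_a / g(y). -/
noncomputable def thetaAB (g : ℝ → ℝ) (pa : ℝ) (y : ℝ) : ℝ := pa / g y

/-- θ_la(x,y) = (p_l − p_a) / (R_L − f(1−x) − g(y)). -/
noncomputable def thetaLA (RL : ℝ) (f g : ℝ → ℝ) (pl pa : ℝ) (p : ℝ × ℝ) : ℝ :=
  (pl - pa) / (RL - f (1 - p.1) - g p.2)

/-- The Stage-III update map h̃. -/
noncomputable def hmap (RL : ℝ) (f g : ℝ → ℝ) (pl pa : ℝ) (p : ℝ × ℝ) : ℝ × ℝ :=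
  (max (1 - max (thetaLA RL f g pl pa p) (thetaLB RL f pl p.1)) 0,
   max (min (thetaLA RL f g pl pa p) 1 - thetaAB g pa p.2) 0)

/-- Auxiliary: the clipped first-coordinate map extended to the unit square. -/
noncomputable def PhiAux (RL : ℝ) (f g : ℝ → ℝ) (pl pa : ℝ) (q : ℝ × ℝ) : ℝ :=
  min ((hmap RL f g pl pa (min q.1 (1 - q.2), q.2)).1) (1 - q.2)

/-- Auxiliary: the function whose root in `x` defines the implicit function. -/
noncomputable def GAux (RL : ℝ) (f g : ℝ → ℝ) (pl pa : ℝ) (q : ℝ × ℝ) : ℝ :=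
  q.1 - PhiAux RL f g pl pa q

/-- Continuity of an implicitly defined root of a strictly monotone family. -/
lemma implicit_root_continuousOn {G : ℝ × ℝ → ℝ} {X : ℝ → ℝ}
    (hG : ContinuousOn G (Icc 0 1 ×ˢ Icc 0 1))
    (hmono : ∀ y ∈ Icc (0:ℝ) 1, ∀ x₁ ∈ Icc (0:ℝ) 1, ∀ x₂ ∈ Icc (0:ℝ) 1,
      x₁ < x₂ → G (x₁, y) < G (x₂, y))
    (hX : ∀ y ∈ Icc (0:ℝ) 1, X y ∈ Icc (0:ℝ) 1 ∧ G (X y, y) = 0) :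
    ContinuousOn X (Icc 0 1) := by
  intro y₀ hy₀
  have hx₀ := (hX y₀ hy₀).1
  have hroot₀ := (hX y₀ hy₀).2
  rw [ContinuousWithinAt, Metric.tendsto_nhds]
  intro ε hε
  have hcw : ∀ b ∈ Icc (0:ℝ) 1, ContinuousWithinAt (fun y => G (b, y)) (Icc 0 1) y₀ := by
    intro b hb
    have : ContinuousOn (fun y => G (b, y)) (Icc 0 1) := by
      apply hG.comp (Continuous.continuousOn (by continuity))
      intro y hy
      exact Set.mk_mem_prod hb hy
    exact this y₀ hy₀
  have hupper : ∀ᶠ y in nhdsWithin y₀ (Icc 0 1), X y < X y₀ + ε := by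
    by_cases hb : X y₀ + ε ≤ 1
    · have hbmem : X y₀ + ε ∈ Icc (0:ℝ) 1 := ⟨by linarith [hx₀.1], hb⟩
      have hpos : 0 < G (X y₀ + ε, y₀) := by
        have h := hmono y₀ hy₀ (X y₀) hx₀ (X y₀ + ε) hbmem (by linarith)
        rw [hroot₀] at h; exact h
      have hev : ∀ᶠ y in nhdsWithin y₀ (Icc 0 1), 0 < G (X y₀ + ε, y) :=
        (hcw _ hbmem).eventually (eventually_gt_nhds hpos)
      filter_upwards [hev, self_mem_nhdsWithin] with y h1 h2
      by_contra hcon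
      push_neg at hcon
      rcases eq_or_lt_of_le hcon with heq | hlt
      · rw [heq, (hX y h2).2] at h1; exact lt_irrefl _ h1
      · have := hmono y h2 (X y₀ + ε) hbmem (X y) (hX y h2).1 hlt
        rw [(hX y h2).2] at this; linarith
    · filter_upwards [self_mem_nhdsWithin] with y hy
      exact lt_of_le_of_lt (hX y hy).1.2 (by push_neg at hb; linarith)
  have hlower : ∀ᶠ y in nhdsWithin y₀ (Icc 0 1), X y₀ - ε < X y := by
    by_cases hb : 0 ≤ X y₀ - ε
    · have hbmem : X y₀ - ε ∈ Icc (0:ℝ) 1 := ⟨hb, by linarith [hx₀.2]⟩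
      have hneg : G (X y₀ - ε, y₀) < 0 := by
        have h := hmono y₀ hy₀ (X y₀ - ε) hbmem (X y₀) hx₀ (by linarith)
        rw [hroot₀] at h; exact h
      have hev : ∀ᶠ y in nhdsWithin y₀ (Icc 0 1), G (X y₀ - ε, y) < 0 :=
        (hcw _ hbmem).eventually (eventually_lt_nhds hneg)
      filter_upwards [hev, self_mem_nhdsWithin] with y h1 h2
      by_contra hcon
      push_neg at hcon
      rcases eq_or_lt_of_le hcon with heq | hlt
      · rw [← heq, (hX y h2).2] at h1; exact lt_irrefl _ h1
      · have := hmono y h2 (X y) (hX y h2).1 (X y₀ - ε) hbmem hlt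
        rw [(hX y h2).2] at this; linarith
    · filter_upwards [self_mem_nhdsWithin] with y hy
      exact lt_of_lt_of_le (by push_neg at hb; linarith) (hX y hy).1.1
  filter_upwards [hupper, hlower] with y h1 h2
  rw [Real.dist_eq, abs_sub_lt_iff]
  constructor <;> linarith

/-- existence part of Proposition 1: for any nonnegative prices there exists
at least one market equilibrium, i.e. a fixed point of h̃ in Ω. -/
theorem stmt4
    (RL : ℝ) (f g : ℝ → ℝ)
    (hf_cont : ContinuousOn f (Set.Icc 0 1))
    (hf_nonneg : ∀ t ∈ Set.Icc (0:ℝ) 1, 0 ≤ f t)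
    (hf_anti : AntitoneOn f (Set.Icc 0 1))
    (hg_cont : ContinuousOn g (Set.Icc 0 1))
    (hg_pos : ∀ t ∈ Set.Icc (0:ℝ) 1, 0 < g t)
    (hg_mono : MonotoneOn g (Set.Icc 0 1))
    (hRL : ∀ p ∈ Omega, f (1 - p.1) + g p.2 < RL)
    (pl pa : ℝ) (hpl : 0 ≤ pl) (hpa : 0 ≤ pa) :
    ∃ p ∈ Omega, hmap RL f g pl pa p = p := by
  classical
  -- basic facts
  have hmem : ∀ p : ℝ × ℝ, p ∈ Omega → p.1 ∈ Icc (0:ℝ) 1 ∧ p.2 ∈ Icc (0:ℝ) 1 := by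
    rintro ⟨x, y⟩ ⟨h1, h2, h3⟩
    exact ⟨⟨h1, by dsimp at *; linarith⟩, ⟨h2, by dsimp at *; linarith⟩⟩
  have h1x : ∀ p : ℝ × ℝ, p ∈ Omega → 1 - p.1 ∈ Icc (0:ℝ) 1 := by
    rintro ⟨x, y⟩ ⟨h1, h2, h3⟩
    exact ⟨by dsimp at *; linarith, by dsimp at *; linarith⟩
  have hgpos : ∀ p : ℝ × ℝ, p ∈ Omega → 0 < g p.2 := fun p hp => hg_pos _ (hmem p hp).2
  have hDla : ∀ p : ℝ × ℝ, p ∈ Omega → 0 < RL - f (1 - p.1) - g p.2 := by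
    intro p hp; have := hRL p hp; linarith
  have hDlb : ∀ p : ℝ × ℝ, p ∈ Omega → 0 < RL - f (1 - p.1) := by
    intro p hp; have := hDla p hp; have := hgpos p hp; linarith
  -- bounds on second coordinate of hmap
  have hy2 : ∀ p : ℝ × ℝ, p ∈ Omega →
      (hmap RL f g pl pa p).2 ≤ max (thetaLA RL f g pl pa p) (thetaLB RL f pl p.1) ∧
      (hmap RL f g pl pa p).2 ≤ 1 := by
    intro p hp
    have hC : 0 ≤ thetaAB g pa p.2 := div_nonneg hpa (hgpos p hp).le
    have hB : 0 ≤ thetaLB RL f pl p.1 := div_nonneg hpl (hDlb p hp).le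
    have hminA : min (thetaLA RL f g pl pa p) 1 ≤ thetaLA RL f g pl pa p := min_le_left _ _
    have hmin1 : min (thetaLA RL f g pl pa p) 1 ≤ 1 := min_le_right _ _
    have hAmax : thetaLA RL f g pl pa p ≤ max (thetaLA RL f g pl pa p) (thetaLB RL f pl p.1) :=
      le_max_left _ _
    have hBmax : thetaLB RL f pl p.1 ≤ max (thetaLA RL f g pl pa p) (thetaLB RL f pl p.1) :=
      le_max_right _ _
    constructor
    · apply max_le (by linarith) (by linarith)
    · apply max_le (by linarith) (by linarith)
  have hnn2 : ∀ p : ℝ × ℝ, (0:ℝ) ≤ (hmap RL f g pl pa p).2 := fun p => le_max_right _ _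
  have hnn1 : ∀ p : ℝ × ℝ, (0:ℝ) ≤ (hmap RL f g pl pa p).1 := fun p => le_max_right _ _
  -- the image point satisfies x' + y' ≤ 1
  have hsum : ∀ p : ℝ × ℝ, p ∈ Omega →
      (hmap RL f g pl pa p).1 ≤ 1 - (hmap RL f g pl pa p).2 := by
    intro p hp
    obtain ⟨h1, h2⟩ := hy2 p hp
    apply max_le (by linarith) (by linarith)
  -- continuity of components on Omega
  have hfc : ContinuousOn (fun p : ℝ × ℝ => f (1 - p.1)) Omega :=
    hf_cont.comp ((continuous_const.sub continuous_fst).continuousOn) h1x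
  have hgc : ContinuousOn (fun p : ℝ × ℝ => g p.2) Omega :=
    hg_cont.comp (continuous_snd.continuousOn) (fun p hp => (hmem p hp).2)
  have hAc : ContinuousOn (thetaLA RL f g pl pa) Omega := by
    unfold thetaLA
    exact continuousOn_const.div ((continuousOn_const.sub hfc).sub hgc)
      (fun p hp => (hDla p hp).ne')
  have hBc : ContinuousOn (fun p : ℝ × ℝ => thetaLB RL f pl p.1) Omega := by
    unfold thetaLB
    exact continuousOn_const.div (continuousOn_const.sub hfc) (fun p hp => (hDlb p hp).ne')
  have hCc : ContinuousOn (fun p : ℝ × ℝ => thetaAB g pa p.2) Omega := by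
    unfold thetaAB
    exact continuousOn_const.div hgc (fun p hp => (hgpos p hp).ne')
  have hH1c : ContinuousOn (fun p : ℝ × ℝ => (hmap RL f g pl pa p).1) Omega := by
    simp only [hmap]
    exact (continuousOn_const.sub (hAc.sup hBc)).sup continuousOn_const
  have hH2c : ContinuousOn (fun p : ℝ × ℝ => (hmap RL f g pl pa p).2) Omega := by
    simp only [hmap]
    exact ((hAc.inf continuousOn_const).sub hCc).sup continuousOn_const
  -- antitonicity of the first component in x
  have hmono1 : ∀ y ∈ Icc (0:ℝ) 1, ∀ x₁ x₂ : ℝ, 0 ≤ x₁ → x₁ ≤ x₂ → x₂ ≤ 1 - y →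
      (hmap RL f g pl pa (x₂, y)).1 ≤ (hmap RL f g pl pa (x₁, y)).1 := by
    intro y hy x₁ x₂ h0 h12 h21
    have hp₁ : ((x₁, y) : ℝ × ℝ) ∈ Omega := ⟨h0, hy.1, by dsimp; linarith⟩
    have hp₂ : ((x₂, y) : ℝ × ℝ) ∈ Omega := ⟨by dsimp; linarith, hy.1, by dsimp; linarith⟩
    have hf12 : f (1 - x₁) ≤ f (1 - x₂) :=
      hf_anti (h1x _ hp₂) (h1x _ hp₁) (by linarith)
    have hd₁ := hDlb _ hp₁
    have hd₂ := hDlb _ hp₂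
    have hl₁ := hDla _ hp₁
    have hl₂ := hDla _ hp₂
    dsimp at hd₁ hd₂ hl₁ hl₂
    have hB12 : thetaLB RL f pl x₁ ≤ thetaLB RL f pl x₂ := by
      unfold thetaLB
      apply div_le_div_of_nonneg_left hpl hd₂ (by linarith)
    have hmaxle : max (thetaLA RL f g pl pa (x₁, y)) (thetaLB RL f pl x₁) ≤
        max (thetaLA RL f g pl pa (x₂, y)) (thetaLB RL f pl x₂) := by
      apply max_le
      · by_cases hpp : 0 ≤ pl - pa
        · refine le_max_of_le_left ?_
          unfold thetaLA
          dsimp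
          apply div_le_div_of_nonneg_left hpp hl₂ (by linarith)
        · refine le_max_of_le_right ?_
          have hA1 : thetaLA RL f g pl pa (x₁, y) ≤ 0 := by
            unfold thetaLA
            apply div_nonpos_of_nonpos_of_nonneg (by linarith) hl₁.le
          have hB2 : 0 ≤ thetaLB RL f pl x₂ := div_nonneg hpl hd₂.le
          linarith
      · exact le_max_of_le_right hB12
    simp only [hmap]
    exact max_le_max (by linarith) le_rfl
  -- properties of PhiAux on the unit square
  set Q : Set (ℝ × ℝ) := Icc (0:ℝ) 1 ×ˢ Icc (0:ℝ) 1 with hQ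
  have hr_mem : ∀ q : ℝ × ℝ, q ∈ Q → (min q.1 (1 - q.2), q.2) ∈ Omega := by
    rintro ⟨x, y⟩ ⟨hx, hy⟩
    refine ⟨le_min hx.1 (by dsimp at *; linarith [hy.2]), hy.1, ?_⟩
    dsimp at *
    have := min_le_right x (1 - y)
    linarith
  have hPhi_nonneg : ∀ q : ℝ × ℝ, q ∈ Q → 0 ≤ PhiAux RL f g pl pa q := by
    rintro ⟨x, y⟩ ⟨hx, hy⟩
    exact le_min (hnn1 _) (by dsimp at *; linarith [hy.2])
  have hPhi_le : ∀ q : ℝ × ℝ, PhiAux RL f g pl pa q ≤ 1 - q.2 := fun q => min_le_right _ _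
  have hPhi_cont : ContinuousOn (PhiAux RL f g pl pa) Q := by
    unfold PhiAux
    apply ContinuousOn.inf _ ((continuous_const.sub continuous_snd).continuousOn)
    exact hH1c.comp
      (((continuous_fst.min (continuous_const.sub continuous_snd)).prodMk
        continuous_snd).continuousOn) hr_mem
  have hPhi_anti : ∀ y ∈ Icc (0:ℝ) 1, ∀ x₁ ∈ Icc (0:ℝ) 1, ∀ x₂ ∈ Icc (0:ℝ) 1,
      x₁ ≤ x₂ → PhiAux RL f g pl pa (x₂, y) ≤ PhiAux RL f g pl pa (x₁, y) := by
    intro y hy x₁ hx₁ x₂ hx₂ h12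
    unfold PhiAux
    dsimp
    apply min_le_min _ le_rfl
    apply hmono1 y hy
    · exact le_min hx₁.1 (by linarith [hy.2])
    · exact min_le_min h12 le_rfl
    · exact min_le_right _ _
  -- strict monotonicity of GAux in x
  have hGmono : ∀ y ∈ Icc (0:ℝ) 1, ∀ x₁ ∈ Icc (0:ℝ) 1, ∀ x₂ ∈ Icc (0:ℝ) 1,
      x₁ < x₂ → GAux RL f g pl pa (x₁, y) < GAux RL f g pl pa (x₂, y) := by
    intro y hy x₁ hx₁ x₂ hx₂ h12
    have := hPhi_anti y hy x₁ hx₁ x₂ hx₂ h12.le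
    unfold GAux
    dsimp
    linarith
  have hGc : ContinuousOn (GAux RL f g pl pa) Q := by
    unfold GAux
    exact continuous_fst.continuousOn.sub hPhi_cont
  -- existence of the root for each y
  have hroot : ∀ y ∈ Icc (0:ℝ) 1, ∃ x, x ∈ Icc (0:ℝ) 1 ∧ GAux RL f g pl pa (x, y) = 0 := by
    intro y hy
    have hc : ContinuousOn (fun x => GAux RL f g pl pa (x, y)) (Icc 0 1) := by
      apply hGc.comp ((continuous_id.prodMk continuous_const).continuousOn)
      exact fun x hx => Set.mk_mem_prod hx hy
    have h0 : GAux RL f g pl pa (0, y) ≤ 0 := by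
      have := hPhi_nonneg (0, y) (Set.mk_mem_prod ⟨le_refl 0, zero_le_one⟩ hy)
      unfold GAux; dsimp; linarith
    have h1 : 0 ≤ GAux RL f g pl pa (1, y) := by
      have := hPhi_le ((1 : ℝ), y)
      unfold GAux; dsimp at *; linarith [hy.1]
    have hsub := intermediate_value_Icc zero_le_one hc
    have h0mem : (0:ℝ) ∈ Icc (GAux RL f g pl pa (0, y)) (GAux RL f g pl pa (1, y)) := ⟨h0, h1⟩
    obtain ⟨x, hx, hGx⟩ := hsub h0mem
    exact ⟨x, hx, hGx⟩
  obtain ⟨X, hXspec⟩ : ∃ X : ℝ → ℝ, ∀ y ∈ Icc (0:ℝ) 1,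
      X y ∈ Icc (0:ℝ) 1 ∧ GAux RL f g pl pa (X y, y) = 0 :=
    ⟨fun y => if h : y ∈ Icc (0:ℝ) 1 then (hroot y h).choose else 0,
     fun y hy => by
      dsimp only
      rw [dif_pos hy]
      exact ⟨(hroot y hy).choose_spec.1, (hroot y hy).choose_spec.2⟩⟩
  have hXc : ContinuousOn X (Icc 0 1) :=
    implicit_root_continuousOn hGc hGmono hXspec
  -- X y = PhiAux (X y, y), hence 0 ≤ X y ≤ 1 - y
  have hXeq : ∀ y ∈ Icc (0:ℝ) 1, X y = PhiAux RL f g pl pa (X y, y) := by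
    intro y hy
    have := (hXspec y hy).2
    unfold GAux at this
    dsimp at this
    linarith
  have hXle : ∀ y ∈ Icc (0:ℝ) 1, X y ≤ 1 - y := by
    intro y hy
    rw [hXeq y hy]
    exact hPhi_le _
  have hXmaps : ∀ y ∈ Icc (0:ℝ) 1, ((X y, y) : ℝ × ℝ) ∈ Omega := by
    intro y hy
    refine ⟨(hXspec y hy).1.1, hy.1, ?_⟩
    have := hXle y hy
    dsimp
    linarith
  -- IVT for the second coordinate
  have hψc : ContinuousOn (fun y => (hmap RL f g pl pa (X y, y)).2 - y) (Icc 0 1) := by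
    apply ContinuousOn.sub _ continuousOn_id
    exact hH2c.comp (hXc.prodMk continuousOn_id) hXmaps
  have hψ0 : 0 ≤ (hmap RL f g pl pa (X 0, 0)).2 - 0 := by
    have := hnn2 (X 0, 0); linarith
  have hψ1 : (hmap RL f g pl pa (X 1, 1)).2 - 1 ≤ 0 := by
    have := (hy2 _ (hXmaps 1 ⟨zero_le_one, le_refl 1⟩)).2
    linarith
  have hsub := intermediate_value_Icc' zero_le_one hψc
  have h0mem : (0:ℝ) ∈ Icc ((hmap RL f g pl pa (X 1, 1)).2 - 1)
      ((hmap RL f g pl pa (X 0, 0)).2 - 0) := ⟨hψ1, hψ0⟩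
  obtain ⟨ys, hys, hψys⟩ := hsub h0mem
  have hfix2 : (hmap RL f g pl pa (X ys, ys)).2 = ys := by dsimp at hψys; linarith
  -- conclusion
  refine ⟨(X ys, ys), hXmaps ys hys, ?_⟩
  have hxle := hXle ys hys
  have hmin : min (X ys) (1 - ys) = X ys := min_eq_left hxle
  have hPhi_eq : PhiAux RL f g pl pa (X ys, ys) =
      min ((hmap RL f g pl pa (X ys, ys)).1) (1 - ys) := by
    unfold PhiAux
    dsimp
    rw [hmin]
  have hle1 : (hmap RL f g pl pa (X ys, ys)).1 ≤ 1 - ys := by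
    have := hsum _ (hXmaps ys hys)
    rw [hfix2] at this
    exact this
  have hfix1 : (hmap RL f g pl pa (X ys, ys)).1 = X ys := by
    conv_rhs => rw [hXeq ys hys, hPhi_eq, min_eq_left hle1]
  rw [Prod.ext_iff]
  exact ⟨hfix1, hfix2⟩
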